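/- If x : ℝ → ℝ is differentiable on an interval T and satisfies the autonomous first-order ODE x'(t) = f(x(t)) for all t in T, where f : ℝ → ℝ is continuous, then x is monotone on T (either nondecreasing throughout or nonincreasing throughout). In particular, any solution of the first-order autonomous ODE cannot oscillate: if x(t₁) = x(t₂) for t₁ < t₂ in T, then x is constant on [t₁, t₂]. -/

import Mathlib

open Set Filter

lemma aux_nonneg (f x : ℝ → ℝ) (hx : Differentiable ℝ x)
    {t₁ t₂ : ℝ} (h12 : t₁ < t₂)
    (hode : ∀ t ∈ Icc t₁ t₂, deriv x t = f (x t))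
    (heq : x t₂ = x t₁) {y : ℝ} (hy : x t₁ < y)
    (hatt : ∃ t ∈ Icc t₁ t₂, x t = y) : 0 ≤ f y := by
  set A : Set ℝ := Icc t₁ t₂ ∩ x ⁻¹' {y} with hA
  have hAclosed : IsClosed A := isClosed_Icc.inter (isClosed_singleton.preimage hx.continuous)
  have hAne : A.Nonempty := by
    obtain ⟨t, ht, hty⟩ := hatt; exact ⟨t, ht, hty⟩
  have hAbdd : BddBelow A := ⟨t₁, fun t ht => ht.1.1⟩
  set p := sInf A with hp
  have hpA : p ∈ A := hAclosed.csInf_mem hAne hAbdd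
  have hxp : x p = y := hpA.2
  have hp1 : t₁ < p := lt_of_le_of_ne hpA.1.1 (fun h => hy.ne (by rw [h]; exact hxp))
  -- On [t₁, p), x < y
  have hlt : ∀ t ∈ Ico t₁ p, x t < y := by
    intro t ht
    rcases lt_trichotomy (x t) y with h | h | h
    · exact h
    · exact absurd (csInf_le hAbdd ⟨⟨ht.1, le_trans ht.2.le hpA.1.2⟩, h⟩) (not_le.2 ht.2)
    · obtain ⟨s, hs, hsy⟩ := intermediate_value_Icc ht.1
        (hx.continuous.continuousOn) (⟨hy.le, h.le⟩ : y ∈ Icc (x t₁) (x t))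
      exact absurd (csInf_le hAbdd ⟨⟨hs.1, le_trans (hs.2.trans ht.2.le) hpA.1.2⟩, hsy⟩)
        (not_le.2 (lt_of_le_of_lt hs.2 ht.2))
  -- deriv x p ≥ 0 via slopes from the left
  have hder : HasDerivAt x (deriv x p) p := (hx p).hasDerivAt
  have htend : Tendsto (slope x p) (nhdsWithin p (Iio p)) (nhds (deriv x p)) :=
    (hasDerivAt_iff_tendsto_slope.1 hder).mono_left
      (nhdsWithin_mono _ (fun t ht => ne_of_lt ht))
  have : (0:ℝ) ≤ deriv x p := by
    have hne : (nhdsWithin p (Iio p)).NeBot := nhdsLT_neBot p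
    refine ge_of_tendsto htend ?_
    filter_upwards [Ioo_mem_nhdsLT_of_mem (⟨hp1, le_refl p⟩ : p ∈ Ioc t₁ p)] with t ht
    have h1 : x t - x p < 0 := by
      have := hlt t ⟨ht.1.le, ht.2⟩; rw [hxp]; linarith
    have h2 : t - p < 0 := by linarith [ht.2]
    rw [slope_def_field]
    exact le_of_lt (div_pos_of_neg_of_neg h1 h2)
  rw [hode p ⟨hpA.1.1, hpA.1.2⟩, hxp] at this
  exact this

lemma aux_zero_gt (f x : ℝ → ℝ) (hx : Differentiable ℝ x)
    {t₁ t₂ : ℝ} (h12 : t₁ < t₂)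
    (hode : ∀ t ∈ Icc t₁ t₂, deriv x t = f (x t))
    (heq : x t₂ = x t₁) {y : ℝ} (hy : x t₁ < y)
    (hatt : ∃ t ∈ Icc t₁ t₂, x t = y) : f y = 0 := by
  have h1 : 0 ≤ f y := aux_nonneg f x hx h12 hode heq hy hatt
  have h2 : 0 ≤ -f y := by
    have hz : Differentiable ℝ (fun t => x (-t)) := hx.comp differentiable_neg
    have h12' : -t₂ < -t₁ := by linarith
    have hode' : ∀ t ∈ Icc (-t₂) (-t₁), deriv (fun t => x (-t)) t = (fun u => -f u) (x (-t)) := by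
      intro t ht
      rw [deriv_comp_neg, hode (-t) ⟨by linarith [ht.2], by linarith [ht.1]⟩]
    have hatt' : ∃ t ∈ Icc (-t₂) (-t₁), x (-t) = y := by
      obtain ⟨t, ht, hty⟩ := hatt
      exact ⟨-t, ⟨by linarith [ht.2], by linarith [ht.1]⟩, by simpa using hty⟩
    have := aux_nonneg (fun u => -f u) (fun t => x (-t)) hz h12' hode'
      (by simpa using heq.symm) (by simpa [heq] using hy) hatt'
    simpa using this
  linarith

lemma aux_zero (f x : ℝ → ℝ) (hx : Differentiable ℝ x)
    {t₁ t₂ : ℝ} (h12 : t₁ < t₂)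
    (hode : ∀ t ∈ Icc t₁ t₂, deriv x t = f (x t))
    (heq : x t₂ = x t₁) {y : ℝ} (hy : y ≠ x t₁)
    (hatt : ∃ t ∈ Icc t₁ t₂, x t = y) : f y = 0 := by
  rcases hy.lt_or_gt with h | h
  · -- y < x t₁ : apply aux_zero_gt to -x and u ↦ -f (-u)
    have hz : Differentiable ℝ (fun t => -x t) := hx.neg
    have hode' : ∀ t ∈ Icc t₁ t₂, deriv (fun t => -x t) t = (fun u => -f (-u)) ((fun t => -x t) t) := by
      intro t ht
      simp only [deriv.fun_neg, hode t ht, neg_neg]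
    have hatt' : ∃ t ∈ Icc t₁ t₂, (fun t => -x t) t = -y := by
      obtain ⟨t, ht, hty⟩ := hatt
      exact ⟨t, ht, by simp [hty]⟩
    have := aux_zero_gt (fun u => -f (-u)) (fun t => -x t) hz h12 hode'
      (by simp [heq]) (by simpa using h) hatt'
    simpa using this
  · exact aux_zero_gt f x hx h12 hode heq h hatt

lemma aux_const (f x : ℝ → ℝ) (hf : Continuous f) (hx : Differentiable ℝ x)
    {t₁ t₂ : ℝ} (h12 : t₁ < t₂)
    (hode : ∀ t ∈ Icc t₁ t₂, deriv x t = f (x t))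
    (heq : x t₂ = x t₁) : ∀ t ∈ Icc t₁ t₂, x t = x t₁ := by
  by_cases hc : ∀ s ∈ Icc t₁ t₂, x s = x t₁
  · exact hc
  push_neg at hc
  obtain ⟨t₀, ht₀, hb⟩ := hc
  -- f vanishes at every attained value ≠ x t₁
  have hzero : ∀ y : ℝ, y ≠ x t₁ → (∃ t ∈ Icc t₁ t₂, x t = y) → f y = 0 :=
    fun y hy hatt => aux_zero f x hx h12 hode heq hy hatt
  -- values strictly between x t₁ and x t₀ are attained
  have hmid : ∀ y : ℝ, y ∈ Ioo (min (x t₁) (x t₀)) (max (x t₁) (x t₀)) → f y = 0 := by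
    intro y hy
    have hsub : Icc t₁ t₀ ⊆ Icc t₁ t₂ := Icc_subset_Icc le_rfl ht₀.2
    have hne : y ≠ x t₁ := by
      rcases le_total (x t₁) (x t₀) with h | h
      · simp only [min_eq_left h, max_eq_right h] at hy; exact hy.1.ne'
      · simp only [min_eq_right h, max_eq_left h] at hy; exact hy.2.ne
    refine hzero y hne ?_
    rcases le_total (x t₁) (x t₀) with h | h
    · obtain ⟨s, hs, hsy⟩ := intermediate_value_Icc ht₀.1 hx.continuous.continuousOn
        (⟨(min_eq_left h ▸ hy.1).le, (max_eq_right h ▸ hy.2).le⟩ : y ∈ Icc (x t₁) (x t₀))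
      exact ⟨s, hsub hs, hsy⟩
    · obtain ⟨s, hs, hsy⟩ := intermediate_value_Icc' ht₀.1 hx.continuous.continuousOn
        (⟨(min_eq_right h ▸ hy.1).le, (max_eq_left h ▸ hy.2).le⟩ : y ∈ Icc (x t₀) (x t₁))
      exact ⟨s, hsub hs, hsy⟩
  -- f (x t₁) = 0 by continuity
  have hfa : f (x t₁) = 0 := by
    rcases hb.lt_or_gt with h | h
    · -- x t₀ < x t₁ : approach from the left
      have hmem : Ioo (x t₀) (x t₁) ∈ nhdsWithin (x t₁) (Iio (x t₁)) :=
        Ioo_mem_nhdsLT_of_mem ⟨h, le_rfl⟩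
      have h1 : Filter.Tendsto f (nhdsWithin (x t₁) (Iio (x t₁))) (nhds (f (x t₁))) :=
        (hf.continuousAt.continuousWithinAt).tendsto
      have h2 : Filter.Tendsto f (nhdsWithin (x t₁) (Iio (x t₁))) (nhds 0) := by
        refine Filter.Tendsto.congr' ?_ tendsto_const_nhds
        filter_upwards [hmem] with y hy
        exact (hmid y (by simpa [min_eq_right h.le, max_eq_left h.le] using hy)).symm
      exact tendsto_nhds_unique h1 h2
    · have hmem : Ioo (x t₁) (x t₀) ∈ nhdsWithin (x t₁) (Ioi (x t₁)) :=
        Ioo_mem_nhdsGT_of_mem ⟨le_rfl, h⟩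
      have h1 : Filter.Tendsto f (nhdsWithin (x t₁) (Ioi (x t₁))) (nhds (f (x t₁))) :=
        (hf.continuousAt.continuousWithinAt).tendsto
      have h2 : Filter.Tendsto f (nhdsWithin (x t₁) (Ioi (x t₁))) (nhds 0) := by
        refine Filter.Tendsto.congr' ?_ tendsto_const_nhds
        filter_upwards [hmem] with y hy
        exact (hmid y (by simpa [min_eq_left h.le, max_eq_right h.le] using hy)).symm
      exact tendsto_nhds_unique h1 h2
  -- hence deriv x = 0 on the whole interval
  have hderiv0 : ∀ s ∈ Icc t₁ t₂, deriv x s = 0 := by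
    intro s hs
    rw [hode s hs]
    by_cases hxs : x s = x t₁
    · rw [hxs]; exact hfa
    · exact hzero (x s) hxs ⟨s, hs, rfl⟩
  -- conclude constancy by MVT
  intro t ht
  rcases eq_or_lt_of_le ht.1 with rfl | hlt
  · rfl
  obtain ⟨c, hc, hcs⟩ := exists_deriv_eq_slope x hlt hx.continuous.continuousOn
    hx.differentiableOn
  rw [hderiv0 c ⟨hc.1.le, hc.2.le.trans ht.2⟩] at hcs
  have := hcs.symm
  rw [div_eq_zero_iff] at this
  rcases this with h | h
  · linarith
  · linarith [ht.1, hlt]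

lemma aux_mono (x : ℝ → ℝ) (hxc : Continuous x) (T : Set ℝ) (hT : T.OrdConnected)
    (hconst : ∀ t₁ ∈ T, ∀ t₂ ∈ T, t₁ < t₂ → x t₁ = x t₂ → ∀ t ∈ Icc t₁ t₂, x t = x t₁) :
    MonotoneOn x T ∨ AntitoneOn x T := by
  by_contra hcon
  push_neg at hcon
  obtain ⟨hmono, hanti⟩ := hcon
  rw [MonotoneOn] at hmono; rw [AntitoneOn] at hanti
  push_neg at hmono hanti
  obtain ⟨a, ha, b, hb, hab, hba⟩ := hmono   -- a ≤ b, x b < x a : down pair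
  obtain ⟨c, hc, d, hd, hcd, hdc⟩ := hanti   -- c ≤ d, x c < x d : up pair
  have hab' : a < b := hab.lt_of_ne (by rintro rfl; exact absurd rfl hba.ne)
  have hcd' : c < d := hcd.lt_of_ne (by rintro rfl; exact absurd rfl hdc.ne')
  set p := min a c with hp
  set q := max b d with hq
  have hpT : p ∈ T := by rcases min_cases a c with ⟨h, _⟩ | ⟨h, _⟩ <;> rw [hp, h] <;> assumption
  have hqT : q ∈ T := by rcases max_cases b d with ⟨h, _⟩ | ⟨h, _⟩ <;> rw [hq, h] <;> assumption
  have hpq : p ≤ q := le_trans (le_trans (min_le_left a c) hab'.le) (le_max_left b d)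
  have hsubT : Icc p q ⊆ T := hT.out hpT hqT
  obtain ⟨v, hv, hvmax⟩ := isCompact_Icc.exists_isMaxOn (nonempty_Icc.2 hpq)
    hxc.continuousOn
  have hvmax' : ∀ t ∈ Icc p q, x t ≤ x v := fun t ht => hvmax ht
  by_cases hbump : x p < x v ∧ x q < x v
  · -- interior bump
    have hpv : p < v := lt_of_le_of_ne hv.1 (by rintro rfl; exact absurd rfl hbump.1.ne)
    have hvq : v < q := lt_of_le_of_ne hv.2 (by rintro rfl; exact absurd rfl hbump.2.ne')
    set y := max (x p) (x q) with hy
    have hyv : y < x v := max_lt hbump.1 hbump.2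
    obtain ⟨s, hs, hsy⟩ := intermediate_value_Icc hpv.le hxc.continuousOn
      (⟨le_max_left _ _, hyv.le⟩ : y ∈ Icc (x p) (x v))
    obtain ⟨t, ht, hty⟩ := intermediate_value_Icc' hvq.le hxc.continuousOn
      (⟨le_max_right _ _, hyv.le⟩ : y ∈ Icc (x q) (x v))
    have hsv : s < v := lt_of_le_of_ne hs.2 (by rintro rfl; exact absurd hsy hyv.ne')
    have hvt : v < t := lt_of_le_of_ne ht.1 (by rintro rfl; exact absurd hty hyv.ne')
    have hxv := hconst s (hsubT ⟨hs.1, hs.2.trans hv.2⟩) t (hsubT ⟨hv.1.trans ht.1, ht.2⟩)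
      (hsv.trans hvt) (hsy.trans hty.symm) v ⟨hsv.le, hvt.le⟩
    rw [hsy] at hxv
    exact absurd hxv hyv.ne'
  · push_neg at hbump
    rcases le_or_gt (x v) (x q) with hvq | hvq
    · -- max attained at right endpoint value; use the down pair a < b, x b < x a
      have haq : a ∈ Icc p q := ⟨min_le_left a c, hab'.le.trans (le_max_left b d)⟩
      have hbq : b ≤ q := le_max_left b d
      have hxa : x a ≤ x q := (hvmax' a haq).trans hvq
      obtain ⟨t, ht, hta⟩ := intermediate_value_Icc hbq hxc.continuousOn
        (⟨hba.le, hxa⟩ : x a ∈ Icc (x b) (x q))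
      have hbt : b < t := lt_of_le_of_ne ht.1 (by rintro rfl; exact absurd hta hba.ne)
      have haT : a ∈ T := ha
      have htT : t ∈ T := hsubT ⟨(min_le_left a c).trans (hab'.le.trans ht.1), ht.2⟩
      have := hconst a haT t htT (hab'.trans hbt) hta.symm b ⟨hab'.le, hbt.le⟩
      exact absurd this hba.ne
    · -- then x v ≤ x p; use the up pair c < d, x c < x d
      have hvp : x v ≤ x p := le_of_not_gt (fun h => absurd (hbump h) (not_le.2 hvq))
      have hdq : d ∈ Icc p q := ⟨(min_le_right a c).trans hcd'.le, le_max_right b d⟩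
      have hpc : p ≤ c := min_le_right a c
      have hxd : x d ≤ x p := (hvmax' d hdq).trans hvp
      obtain ⟨s, hs, hsd⟩ := intermediate_value_Icc' hpc hxc.continuousOn
        (⟨hdc.le, hxd⟩ : x d ∈ Icc (x c) (x p))
      have hsc : s < c := lt_of_le_of_ne hs.2 (by rintro rfl; exact absurd hsd hdc.ne)
      have hsT : s ∈ T := hsubT ⟨hs.1, (hs.2.trans hcd'.le).trans (le_max_right b d)⟩
      have := hconst s hsT d hd (hsc.trans hcd') hsd c ⟨hsc.le, hcd'.le⟩
      rw [hsd] at this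
      exact absurd this hdc.ne 

theorem first_order_autonomous_monotone
    (T : Set ℝ) (hT : T.OrdConnected) (f : ℝ → ℝ) (hf : Continuous f)
    (x : ℝ → ℝ) (hx : Differentiable ℝ x)
    (hode : ∀ t ∈ T, deriv x t = f (x t)) :
    (MonotoneOn x T ∨ AntitoneOn x T) ∧
      (∀ t₁ ∈ T, ∀ t₂ ∈ T, t₁ < t₂ → x t₁ = x t₂ →
        ∀ t ∈ Set.Icc t₁ t₂, x t = x t₁) := by
  have key : ∀ t₁ ∈ T, ∀ t₂ ∈ T, t₁ < t₂ → x t₁ = x t₂ →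
      ∀ t ∈ Set.Icc t₁ t₂, x t = x t₁ := by
    intro t₁ ht₁ t₂ ht₂ h12 heq
    exact aux_const f x hf hx h12 (fun t ht => hode t (hT.out ht₁ ht₂ ht)) heq.symm
  exact ⟨aux_mono x hx.continuous T hT key, key⟩
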